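/- Let G be a proper subdomain of ℝⁿ and γ a rectifiable arc in G from x₁ to x₂ which is a μ-carrot arc with center x₂ (i.e., ℓ(γ[x₁,u]) ≤ μ·d_G(u) for all u ∈ γ, μ ≥ 1). Then the quasihyperbolic length of γ satisfies ℓ_{k_G}(γ) ≤ 4μ·log(1 + 2ℓ(γ)/d_G(x₁)). -/

import Mathlib

open Metric Set

open MeasureTheory intervalIntegral


lemma real_log_step (c x y e : ℝ) (hc : 0 < c) (hx : 0 ≤ x) (hxy : x ≤ y) (hye : y - x ≤ e) :
    (y - x) / (2*x + c) ≤ (1/2) * (Real.log (2*y + c) - Real.log (2*x + c)) + 2*e*(y-x)/c^2 := by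
  have hxc : 0 < 2*x + c := by linarith
  have hyc : 0 < 2*y + c := by linarith
  have hlog : Real.log ((2*x+c)/(2*y+c)) ≤ (2*x+c)/(2*y+c) - 1 :=
    Real.log_le_sub_one_of_pos (by positivity)
  rw [Real.log_div hxc.ne' hyc.ne'] at hlog
  have h1 : 2*(y-x)/(2*y+c) ≤ Real.log (2*y+c) - Real.log (2*x+c) := by
    have : (2*x+c)/(2*y+c) - 1 = -(2*(y-x)/(2*y+c)) := by field_simp; ring
    rw [this] at hlog; linarith
  have h2 : (y-x)/(2*x+c) - (y-x)/(2*y+c) ≤ 2*e*(y-x)/c^2 := by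
    have key : (y-x)/(2*x+c) - (y-x)/(2*y+c) = (y-x)*(2*(y-x))/((2*x+c)*(2*y+c)) := by
      rw [div_sub_div _ _ hxc.ne' hyc.ne']; ring
    rw [key]
    have hcc : c^2 ≤ (2*x+c)*(2*y+c) := by nlinarith
    have hnum : (y-x)*(2*(y-x)) ≤ 2*e*(y-x) := by nlinarith
    calc (y-x)*(2*(y-x))/((2*x+c)*(2*y+c)) ≤ (y-x)*(2*(y-x))/c^2 := by
          apply div_le_div_of_nonneg_left ?_ (by positivity) hcc
          nlinarith
      _ ≤ 2*e*(y-x)/c^2 := by exact div_le_div_of_nonneg_right hnum (by positivity)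
  rw [show 2*(y-x)/(2*y+c) = 2*((y-x)/(2*y+c)) from mul_div_assoc 2 _ _] at h1
  linarith


lemma key_partition (g L : ℝ → ℝ) (hg0 : ∀ t, 0 ≤ g t)
    (hgint : IntervalIntegrable g volume 0 1)
    (hL : ∀ t, L t = ∫ s in (0:ℝ)..t, g s) (c : ℝ) (hc : 0 < c) :
    (∫ t in (0:ℝ)..1, g t / (2 * L t + c)) ≤
      (1/2) * (Real.log (2 * L 1 + c) - Real.log c) := by
  have hsubint : ∀ u v : ℝ, u ∈ Icc (0:ℝ) 1 → v ∈ Icc (0:ℝ) 1 →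
      IntervalIntegrable g volume u v := by
    intro u v hu hv
    apply hgint.mono_set
    rw [uIcc_of_le zero_le_one]
    exact uIcc_subset_Icc hu hv
  have hsub : ∀ u v : ℝ, 0 ≤ u → u ≤ v → v ≤ 1 →
      (∫ t in u..v, g t) = L v - L u := by
    intro u v hu huv hv
    have h1 := hsubint 0 u ⟨le_rfl, zero_le_one⟩ ⟨hu, (huv.trans hv)⟩
    have h2 := hsubint u v ⟨hu, huv.trans hv⟩ ⟨hu.trans huv, hv⟩
    have := integral_add_adjacent_intervals h1 h2
    rw [hL u, hL v]; linarith
  have hLmono : ∀ u v : ℝ, 0 ≤ u → u ≤ v → v ≤ 1 → L u ≤ L v := by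
    intro u v hu huv hv
    have h := hsub u v hu huv hv
    have := intervalIntegral.integral_nonneg (μ := volume) huv (fun x _ => hg0 x)
    linarith
  have hL0 : L 0 = 0 := by rw [hL 0, intervalIntegral.integral_same]
  have hLnn : ∀ t : ℝ, 0 ≤ t → t ≤ 1 → 0 ≤ L t := by
    intro t h0 h1; have := hLmono 0 t le_rfl h0 h1; linarith
  have hLpos : ∀ t ∈ Icc (0:ℝ) 1, 0 < 2 * L t + c := by
    intro t ht; have := hLnn t ht.1 ht.2; linarith
  have hLcont : ContinuousOn L (Icc 0 1) := by
    have hint : IntegrableOn g (Icc (0:ℝ) 1) volume :=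
      (intervalIntegrable_iff_integrableOn_Icc_of_le zero_le_one).1 hgint
    have := intervalIntegral.continuousOn_primitive_interval
      (a := 0) (b := 1) (μ := volume) (f := g) (by rwa [uIcc_of_le zero_le_one])
    rw [uIcc_of_le zero_le_one] at this
    exact this.congr (fun s _ => hL s)
  have hφint : IntervalIntegrable (fun t => g t / (2 * L t + c)) volume 0 1 := by
    have hcont_inv : ContinuousOn (fun t => (2 * L t + c)⁻¹) (uIcc (0:ℝ) 1) := by
      rw [uIcc_of_le zero_le_one]
      exact ((continuousOn_const.mul hLcont).add continuousOn_const).inv₀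
        (fun t ht => (hLpos t ht).ne')
    simpa [div_eq_mul_inv] using hgint.mul_continuousOn hcont_inv
  -- main ε-argument
  apply le_of_forall_pos_le_add
  intro ε hε
  have hL1nn : 0 ≤ L 1 := hLnn 1 zero_le_one le_rfl
  set e : ℝ := ε * c^2 / (2*(L 1 + 1)) with he_def
  have he : 0 < e := by positivity
  have huc := (isCompact_Icc.uniformContinuousOn_of_continuous hLcont)
  rw [Metric.uniformContinuousOn_iff] at huc
  obtain ⟨δ, hδ, hucd⟩ := huc e he
  obtain ⟨N, hN⟩ := exists_nat_gt (1/δ)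
  have hNpos : 0 < (N:ℝ) := lt_trans (by positivity) hN
  have hNδ : 1 / (N:ℝ) < δ := by
    rw [div_lt_iff₀ hNpos]
    rw [div_lt_iff₀ hδ] at hN
    linarith [mul_comm (N:ℝ) δ]
  set a : ℕ → ℝ := fun i => (i:ℝ) / N with ha_def
  have ha0 : a 0 = 0 := by simp [ha_def]
  have haN : a N = 1 := by rw [ha_def]; exact div_self hNpos.ne'
  have hamem : ∀ i : ℕ, i ≤ N → a i ∈ Icc (0:ℝ) 1 := by
    intro i hi
    constructor
    · positivity
    · rw [div_le_one hNpos]; exact_mod_cast hi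
  have hamono : ∀ i : ℕ, a i ≤ a (i+1) := by
    intro i
    apply div_le_div_of_nonneg_right ?_ hNpos.le
    exact_mod_cast Nat.le_succ i
  have hadist : ∀ i : ℕ, a (i+1) - a i = 1 / N := by
    intro i; rw [ha_def]; push_cast; field_simp; ring
  have hφadj : ∀ i : ℕ, i < N → IntervalIntegrable (fun t => g t / (2 * L t + c))
      volume (a i) (a (i+1)) := by
    intro i hi
    apply hφint.mono_set
    rw [uIcc_of_le zero_le_one]
    exact uIcc_subset_Icc (hamem i hi.le) (hamem (i+1) hi)
  have hsumeq : ∑ i ∈ Finset.range N, (∫ t in (a i)..(a (i+1)), g t / (2 * L t + c))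
      = ∫ t in (0:ℝ)..1, g t / (2 * L t + c) := by
    rw [intervalIntegral.sum_integral_adjacent_intervals hφadj, ha0, haN]
  set f : ℕ → ℝ := fun i => (1/2) * Real.log (2 * L (a i) + c) + (2*e/c^2) * L (a i)
    with hf_def
  have hstep : ∀ i : ℕ, i < N →
      (∫ t in (a i)..(a (i+1)), g t / (2 * L t + c)) ≤ f (i+1) - f i := by
    intro i hi
    have hu := hamem i hi.le
    have hv := hamem (i+1) hi
    have huv := hamono i
    have hLuv := hLmono (a i) (a (i+1)) hu.1 huv hv.2
    have hΔ : L (a (i+1)) - L (a i) ≤ e := by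
      have := hucd (a (i+1)) hv (a i) hu
        (by rw [Real.dist_eq, abs_of_nonneg (by linarith [hadist i] : (0:ℝ) ≤ a (i+1) - a i)]
            rw [hadist i]; exact hNδ)
      rw [Real.dist_eq] at this
      calc L (a (i+1)) - L (a i) ≤ |L (a (i+1)) - L (a i)| := le_abs_self _
        _ ≤ e := this.le
    have hb1 : (∫ t in (a i)..(a (i+1)), g t / (2 * L t + c))
        ≤ (L (a (i+1)) - L (a i)) / (2 * L (a i) + c) := by
      have heq : (∫ t in (a i)..(a (i+1)), g t / (2 * L (a i) + c))
          = (L (a (i+1)) - L (a i)) / (2 * L (a i) + c) := by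
        rw [intervalIntegral.integral_div, hsub (a i) (a (i+1)) hu.1 huv hv.2]
      rw [← heq]
      apply intervalIntegral.integral_mono_on huv (hφadj i hi)
        ((hsubint (a i) (a (i+1)) hu hv).div_const _)
      intro x hx
      have hx01 : x ∈ Icc (0:ℝ) 1 := ⟨hu.1.trans hx.1, hx.2.trans hv.2⟩
      have hLx : L (a i) ≤ L x := hLmono (a i) x hu.1 hx.1 hx01.2
      exact div_le_div_of_nonneg_left (hg0 x) (hLpos (a i) hu) (by linarith)
    have hb2 := real_log_step c (L (a i)) (L (a (i+1))) e hc
      (hLnn (a i) hu.1 hu.2) hLuv hΔ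
    have hfd : f (i+1) - f i = (1/2) * (Real.log (2 * L (a (i+1)) + c)
        - Real.log (2 * L (a i) + c)) + 2*e*(L (a (i+1)) - L (a i))/c^2 := by
      rw [hf_def]; ring
    rw [hfd]
    linarith
  have htel : ∑ i ∈ Finset.range N, (f (i+1) - f i) = f N - f 0 :=
    Finset.sum_range_sub f N
  have hfin : (∫ t in (0:ℝ)..1, g t / (2 * L t + c)) ≤ f N - f 0 := by
    rw [← hsumeq, ← htel]
    exact Finset.sum_le_sum (fun i hi => hstep i (Finset.mem_range.1 hi))
  have hfN : f N - f 0 = (1/2) * (Real.log (2 * L 1 + c) - Real.log c)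
      + (2*e/c^2) * L 1 := by
    rw [hf_def]; simp only [ha0, haN, hL0]
    ring_nf
  have hee : (2*e/c^2) * L 1 ≤ ε := by
    rw [he_def]
    rw [show 2 * (ε * c ^ 2 / (2 * (L 1 + 1))) / c ^ 2 * L 1
        = ε * (L 1 / (L 1 + 1)) by field_simp]
    have h1 : L 1 / (L 1 + 1) ≤ 1 := by
      rw [div_le_one (by linarith)]; linarith
    nlinarith
  linarith
/-- For a `μ`-carrot arc `γ` in `G` from `x₁ = γ 0` to `x₂ = γ 1` with center `x₂`,
the quasihyperbolic length satisfies `ℓ_{k_G}(γ) ≤ 4μ·log(1 + 2ℓ(γ)/d_G(x₁))`. -/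
theorem stmt15 {n : ℕ} (G : Set (EuclideanSpace ℝ (Fin n)))
    (hG : IsOpen G) (hGconn : IsConnected G) (hproper : Gᶜ.Nonempty)
    (μ : ℝ) (hμ : 1 ≤ μ)
    (γ : ℝ → EuclideanSpace ℝ (Fin n))
    (hcont : ContinuousOn γ (Icc 0 1))
    (hdiff : ∀ t ∈ Icc (0:ℝ) 1, DifferentiableAt ℝ γ t)
    (hin : ∀ t ∈ Icc (0:ℝ) 1, γ t ∈ G)
    (hcarrot : ∀ t ∈ Icc (0:ℝ) 1,
      (∫ s in (0:ℝ)..t, ‖deriv γ s‖) ≤ μ * infDist (γ t) Gᶜ) :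
    (∫ t in (0:ℝ)..1, ‖deriv γ t‖ / infDist (γ t) Gᶜ) ≤
      4 * μ * Real.log (1 + 2 * (∫ t in (0:ℝ)..1, ‖deriv γ t‖) / infDist (γ 0) Gᶜ) := by
  set g : ℝ → ℝ := fun t => ‖deriv γ t‖ with hg_def
  set d : ℝ → ℝ := fun t => infDist (γ t) Gᶜ with hd_def
  have hg0 : ∀ t, 0 ≤ g t := fun t => norm_nonneg _
  have hdpos : ∀ t ∈ Icc (0:ℝ) 1, 0 < d t := by
    intro t ht
    exact (hG.isClosed_compl.notMem_iff_infDist_pos hproper).1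
      (by simp only [mem_compl_iff, not_not]; exact hin t ht)
  have hd1pos : 0 < d 0 := hdpos 0 ⟨le_rfl, zero_le_one⟩
  have hdcont : ContinuousOn d (Icc 0 1) :=
    continuous_infDist_pt (Gᶜ) |>.comp_continuousOn hcont
  by_cases hgint : IntervalIntegrable g volume 0 1
  · -- integrable case
    set L : ℝ → ℝ := fun t => ∫ s in (0:ℝ)..t, g s with hL_def
    have hμpos : (0:ℝ) < μ := lt_of_lt_of_le zero_lt_one hμ
    -- FTC distance bound
    have hderivint : IntervalIntegrable (deriv γ) volume 0 1 := by
      rw [intervalIntegrable_iff] at hgint ⊢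
      exact (integrable_norm_iff ((measurable_deriv γ).aestronglyMeasurable.restrict)).1 hgint
    have hdist : ∀ t ∈ Icc (0:ℝ) 1, dist (γ t) (γ 0) ≤ L t := by
      intro t ht
      have hFTC : (∫ s in (0:ℝ)..t, deriv γ s) = γ t - γ 0 := by
        apply intervalIntegral.integral_eq_sub_of_hasDerivAt
        · intro s hs
          rw [uIcc_of_le ht.1] at hs
          exact (hdiff s ⟨hs.1, hs.2.trans ht.2⟩).hasDerivAt
        · apply hderivint.mono_set
          rw [uIcc_of_le zero_le_one]
          exact uIcc_subset_Icc ⟨le_rfl, zero_le_one⟩ ht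
      rw [dist_eq_norm, ← hFTC]
      exact intervalIntegral.norm_integral_le_integral_norm ht.1
    -- lower bound on d
    have hd_lb : ∀ t ∈ Icc (0:ℝ) 1, (2 * L t + d 0) / (4 * μ) ≤ d t := by
      intro t ht
      have h1 : L t ≤ μ * d t := hcarrot t ht
      have h2 : d 0 ≤ d t + dist (γ 0) (γ t) :=
        infDist_le_infDist_add_dist
      rw [dist_comm] at h2
      have h3 := hdist t ht
      have hdt := hdpos t ht
      rw [div_le_iff₀ (by linarith : (0:ℝ) < 4 * μ)]
      nlinarith
    -- integrability of quasihyperbolic integrand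
    have hqint : IntervalIntegrable (fun t => g t / d t) volume 0 1 := by
      have hcont_inv : ContinuousOn (fun t => (d t)⁻¹) (uIcc (0:ℝ) 1) := by
        rw [uIcc_of_le zero_le_one]
        exact hdcont.inv₀ (fun t ht => (hdpos t ht).ne')
      simpa [div_eq_mul_inv] using hgint.mul_continuousOn hcont_inv
    have hLcont : ContinuousOn L (Icc 0 1) := by
      have hint : IntegrableOn g (Icc (0:ℝ) 1) volume :=
        (intervalIntegrable_iff_integrableOn_Icc_of_le zero_le_one).1 hgint
      have := intervalIntegral.continuousOn_primitive_interval
        (a := 0) (b := 1) (μ := volume) (f := g) (by rwa [uIcc_of_le zero_le_one])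
      rw [uIcc_of_le zero_le_one] at this
      exact this
    have hφint : IntervalIntegrable (fun t => 4 * μ * (g t / (2 * L t + d 0))) volume 0 1 := by
      have hcont_inv : ContinuousOn (fun t => (2 * L t + d 0)⁻¹) (uIcc (0:ℝ) 1) := by
        rw [uIcc_of_le zero_le_one]
        apply ((continuousOn_const.mul hLcont).add continuousOn_const).inv₀
        intro t ht
        have hLnn : 0 ≤ L t := intervalIntegral.integral_nonneg ht.1 (fun u _ => hg0 u)
        have := hd1pos
        exact (show (0:ℝ) < 2 * L t + d 0 by linarith).ne'
      have := (hgint.mul_continuousOn hcont_inv).const_mul (4 * μ)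
      simpa [div_eq_mul_inv, mul_assoc] using this
    have step1 : (∫ t in (0:ℝ)..1, g t / d t)
        ≤ ∫ t in (0:ℝ)..1, 4 * μ * (g t / (2 * L t + d 0)) := by
      apply intervalIntegral.integral_mono_on zero_le_one hqint hφint
      intro x hx
      have hlb := hd_lb x hx
      have hden : 0 < (2 * L x + d 0) / (4 * μ) := by
        have hLnn : 0 ≤ L x := intervalIntegral.integral_nonneg hx.1 (fun u _ => hg0 u)
        positivity
      calc g x / d x ≤ g x / ((2 * L x + d 0) / (4 * μ)) :=
            div_le_div_of_nonneg_left (hg0 x) hden hlb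
        _ = 4 * μ * (g x / (2 * L x + d 0)) := by
            rw [div_div_eq_mul_div]; ring
    have step2 : (∫ t in (0:ℝ)..1, g t / (2 * L t + d 0))
        ≤ (1/2) * (Real.log (2 * L 1 + d 0) - Real.log (d 0)) :=
      key_partition g L hg0 hgint (fun t => rfl) (d 0) hd1pos
    have hL1nn : 0 ≤ L 1 := intervalIntegral.integral_nonneg zero_le_one (fun u _ => hg0 u)
    have hconst : (∫ t in (0:ℝ)..1, 4 * μ * (g t / (2 * L t + d 0)))
        = 4 * μ * ∫ t in (0:ℝ)..1, g t / (2 * L t + d 0) := by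
      rw [← intervalIntegral.integral_const_mul]
    have hlogeq : Real.log (2 * L 1 + d 0) - Real.log (d 0)
        = Real.log (1 + 2 * L 1 / d 0) := by
      rw [← Real.log_div (by linarith) hd1pos.ne']
      congr 1
      field_simp
      ring
    have hlognn : 0 ≤ Real.log (1 + 2 * L 1 / d 0) := by
      apply Real.log_nonneg
      have : 0 ≤ 2 * L 1 / d 0 := by positivity
      linarith
    calc (∫ t in (0:ℝ)..1, g t / d t)
        ≤ 4 * μ * ∫ t in (0:ℝ)..1, g t / (2 * L t + d 0) := by rw [← hconst]; exact step1
      _ ≤ 4 * μ * ((1/2) * (Real.log (2 * L 1 + d 0) - Real.log (d 0))) := by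
          apply mul_le_mul_of_nonneg_left step2 (by linarith)
      _ = 2 * μ * Real.log (1 + 2 * L 1 / d 0) := by rw [hlogeq]; ring
      _ ≤ 4 * μ * Real.log (1 + 2 * L 1 / d 0) := by nlinarith
  · -- non-integrable case: both sides are zero
    have hq : ¬ IntervalIntegrable (fun t => g t / d t) volume 0 1 := by
      intro h
      apply hgint
      have hmul : IntervalIntegrable (fun t => (g t / d t) * d t) volume 0 1 := by
        apply h.mul_continuousOn
        rwa [uIcc_of_le zero_le_one]
      apply hmul.congr
      intro x hx
      rw [uIoc_of_le zero_le_one] at hx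
      exact div_mul_cancel₀ (g x) (hdpos x ⟨hx.1.le, hx.2⟩).ne'
    rw [intervalIntegral.integral_undef hq, intervalIntegral.integral_undef hgint]
    simp
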